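/- Let n ≥ 1, let K₀ be a convex body in ℝⁿ, and let A, B be centrally symmetric convex bodies in ℝⁿ. If for every linear map L : ℝⁿ → ℝⁿ one has vol(A + L(K₀)) ≤ vol(B + L(K₀)), then A ⊆ B. -/

import Mathlib

open MeasureTheory Pointwise Set
open scoped RealInnerProductSpace

set_option maxHeartbeats 1600000

/-- **Theorem (symmetric case, linear images of a fixed body suffice).**
If `A`, `B` are centrally symmetric convex bodies in `ℝⁿ`, `K₀` a convex body,
and `vol(A + L(K₀)) ≤ vol(B + L(K₀))` for every linear map `L : ℝⁿ → ℝⁿ`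
(possibly degenerate), then `A ⊆ B`. -/
theorem sum_comparison_symmetric_linear_images (n : ℕ) (hn : 1 ≤ n)
    (K₀ A B : Set (EuclideanSpace ℝ (Fin n)))
    (hK₁ : IsCompact K₀) (hK₂ : Convex ℝ K₀) (hK₃ : (interior K₀).Nonempty)
    (hA₁ : IsCompact A) (hA₂ : Convex ℝ A) (hA₃ : (interior A).Nonempty)
    (hB₁ : IsCompact B) (hB₂ : Convex ℝ B) (hB₃ : (interior B).Nonempty)
    (hAsymm : A = -A) (hBsymm : B = -B)
    (h : ∀ L : EuclideanSpace ℝ (Fin n) →ₗ[ℝ] EuclideanSpace ℝ (Fin n),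
        volume (A + L '' K₀) ≤ volume (B + L '' K₀)) :
    A ⊆ B := by
  obtain ⟨m, rfl⟩ : ∃ m, n = m + 1 := ⟨n - 1, (Nat.succ_pred_eq_of_pos hn).symm⟩
  intro a ha
  by_contra haB
  -- `0 ∈ B`
  have hB0 : (0 : EuclideanSpace ℝ (Fin (m+1))) ∈ B := by
    obtain ⟨b₀, hb₀⟩ := hB₃
    have hb₀' : b₀ ∈ B := interior_subset hb₀
    have hnb₀ : -b₀ ∈ B := by rw [hBsymm]; simpa using hb₀'
    have := hB₂ hb₀' hnb₀ (by norm_num : (0:ℝ) ≤ 1/2) (by norm_num : (0:ℝ) ≤ 1/2) (by norm_num)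
    simpa using this
  -- separation
  obtain ⟨f, cf, hfB, hfa⟩ := geometric_hahn_banach_closed_point hB₂ hB₁.isClosed haB
  have hcf0 : 0 < cf := by simpa using hfB 0 hB0
  set v : EuclideanSpace ℝ (Fin (m+1)) :=
    (InnerProductSpace.toDual ℝ (EuclideanSpace ℝ (Fin (m+1)))).symm f with hv
  have hvf : ∀ x : EuclideanSpace ℝ (Fin (m+1)), ⟪v, x⟫ = f x := fun x =>
    InnerProductSpace.toDual_symm_apply
  have hvne : v ≠ 0 := by
    intro h0
    have : f a = 0 := by rw [← hvf a, h0]; simp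
    linarith
  have hvnorm : 0 < ‖v‖ := norm_pos_iff.2 hvne
  set u : EuclideanSpace ℝ (Fin (m+1)) := ‖v‖⁻¹ • v with hu
  have hunorm : ‖u‖ = 1 := norm_smul_inv_norm hvne
  have huu : ⟪u, u⟫ = 1 := by
    rw [real_inner_self_eq_norm_sq, hunorm]; norm_num
  have huip : ∀ x : EuclideanSpace ℝ (Fin (m+1)), ⟪u, x⟫ = ‖v‖⁻¹ * f x := by
    intro x; rw [hu, real_inner_smul_left, hvf]
  set t : ℝ := ⟪u, a⟫ with ht
  set h₀ : ℝ := cf / ‖v‖ with hh₀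
  have hh₀pos : 0 < h₀ := div_pos hcf0 hvnorm
  have hth : h₀ < t := by
    rw [ht, huip, hh₀, div_eq_inv_mul]
    exact mul_lt_mul_of_pos_left hfa (inv_pos.2 hvnorm)
  have htpos : 0 < t := hh₀pos.trans hth
  have hBle : ∀ b ∈ B, ⟪u, b⟫ ≤ h₀ := by
    intro b hb
    rw [huip, hh₀, div_eq_inv_mul]
    exact le_of_lt (mul_lt_mul_of_pos_left (hfB b hb) (inv_pos.2 hvnorm))
  have hBabs : ∀ b ∈ B, |⟪u, b⟫| ≤ h₀ := by
    intro b hb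
    refine abs_le.2 ⟨?_, hBle b hb⟩
    have hnb : -b ∈ B := by rw [hBsymm]; simpa using hb
    have := hBle _ hnb
    rw [inner_neg_right] at this
    linarith
  -- orthonormal basis with `bb 0 = u`
  obtain ⟨bb, hbb⟩ : ∃ bb : OrthonormalBasis (Fin (m+1)) ℝ (EuclideanSpace ℝ (Fin (m+1))),
      ∀ i ∈ ({0} : Set (Fin (m+1))), bb i = (fun _ => u) i := by
    refine Orthonormal.exists_orthonormalBasis_extension_of_card_eq ?_ ?_
    · simp
    · constructor
      · intro i; simpa using hunorm
      · intro i j hij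
        exact absurd (Subtype.ext (by
          have hi := i.2; have hj := j.2
          simp only [mem_singleton_iff] at hi hj
          rw [hi, hj])) hij
  have hbb0 : bb 0 = u := hbb 0 rfl
  -- the "tail" coordinates map
  set tailL : EuclideanSpace ℝ (Fin (m+1)) →L[ℝ] (Fin m → ℝ) :=
    ContinuousLinearMap.pi (fun j => innerSL ℝ (bb j.succ)) with htailL
  have htail_apply : ∀ x j, tailL x j = ⟪bb j.succ, x⟫ := fun x j => rfl
  set Φ : EuclideanSpace ℝ (Fin (m+1)) ≃ᵐ (ℝ × (Fin m → ℝ)) :=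
    (bb.measurableEquiv.trans (MeasurableEquiv.toLp 2 (Fin (m+1) → ℝ)).symm).trans
      (MeasurableEquiv.piFinSuccAbove (fun _ => ℝ) 0) with hΦdef
  have hΦmp : MeasurePreserving Φ volume volume :=
    ((volume_preserving_piFinSuccAbove (fun _ : Fin (m+1) => ℝ) 0).comp
      (EuclideanSpace.volume_preserving_symm_measurableEquiv_toLp (Fin (m+1)))).comp
      bb.measurePreserving_measurableEquiv
  have hΦapply : ∀ x, Φ x = (⟪u, x⟫, tailL x) := by
    intro x
    have h0 : Φ x = (bb.repr x 0, Fin.tail (bb.repr x)) := rfl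
    rw [h0]
    refine Prod.ext ?_ ?_
    · simp [bb.repr_apply_apply, hbb0]
    · funext j
      simp [Fin.tail, bb.repr_apply_apply, htail_apply]
  have himg : ∀ S : Set (EuclideanSpace ℝ (Fin (m+1))), MeasurableSet S →
      volume (Φ '' S) = volume S := by
    intro S hS
    rw [MeasurableEquiv.image_eq_preimage_symm]
    exact (hΦmp.symm Φ).measure_preimage hS.nullMeasurableSet
  -- projection
  set P : EuclideanSpace ℝ (Fin (m+1)) →ₗ[ℝ] EuclideanSpace ℝ (Fin (m+1)) :=
    LinearMap.id - ((innerSL ℝ u).toLinearMap.smulRight u) with hP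
  have hPapply : ∀ x, P x = x - ⟪u,x⟫ • u := fun x => rfl
  have hMval : ∀ (l : ℝ) (x), Φ ((l • P) x) = (0, l • tailL x) := by
    intro l x
    rw [hΦapply]
    refine Prod.ext ?_ ?_
    · show ⟪u, (l • P) x⟫ = 0
      rw [LinearMap.smul_apply, inner_smul_right, hPapply, inner_sub_right,
        inner_smul_right, huu]
      ring
    · show tailL ((l • P) x) = l • tailL x
      rw [LinearMap.smul_apply, _root_.map_smul]
      congr 1
      funext j
      rw [htail_apply, hPapply, inner_sub_right, inner_smul_right, ← hbb0,
        bb.orthonormal.2 (Fin.succ_ne_zero j), htail_apply]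
      ring
  have hM : ∀ (l : ℝ) k, ⟪u, (l • P) k⟫ = 0 ∧ tailL ((l • P) k) = l • tailL k := by
    intro l k
    have h1 := (hΦapply ((l • P) k)).symm.trans (hMval l k)
    rw [Prod.ext_iff] at h1
    exact h1
  -- surjectivity of tailL, interior of 𝔎
  have hsurj : Function.Surjective tailL := by
    intro y
    refine ⟨bb.repr.symm ((WithLp.equiv 2 _).symm (Fin.cons 0 y)), ?_⟩
    funext j
    rw [htail_apply, ← bb.repr_apply_apply]
    simp
  have hopen : IsOpenMap tailL := ContinuousLinearMap.isOpenMap tailL hsurj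
  set 𝔎 : Set (Fin m → ℝ) := tailL '' K₀ with h𝔎
  have h𝔎cpt : IsCompact 𝔎 := hK₁.image tailL.continuous
  have h𝔎conv : Convex ℝ 𝔎 := hK₂.linear_image tailL.toLinearMap
  have h𝔎int : (interior 𝔎).Nonempty := by
    obtain ⟨k₀, hk₀⟩ := hK₃
    exact ⟨tailL k₀, interior_maximal (image_mono interior_subset)
      (hopen _ isOpen_interior) ⟨k₀, hk₀, rfl⟩⟩
  have h𝔎pos : 0 < volume 𝔎 := Measure.measure_pos_of_nonempty_interior volume h𝔎int
  have h𝔎fin : volume 𝔎 < ⊤ := h𝔎cpt.measure_lt_top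
  obtain ⟨y₀, hy₀⟩ := h𝔎int
  obtain ⟨ε, hε, hballε⟩ := Metric.isOpen_iff.1 isOpen_interior y₀ hy₀
  set ε2 : ℝ := ε/2 with hε2def
  have hε2 : 0 < ε2 := by rw [hε2def]; linarith
  have hball : Metric.closedBall y₀ ε2 ⊆ 𝔎 :=
    (Metric.closedBall_subset_ball (by rw [hε2def]; linarith)).trans
      (hballε.trans interior_subset)
  set Q : Set (Fin m → ℝ) := tailL '' B with hQdef
  have hQcpt : IsCompact Q := hB₁.image tailL.continuous
  obtain ⟨R, hR⟩ := hQcpt.isBounded.subset_closedBall 0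
  set c : ℝ := (|R| + 1) / ε2 with hc
  have hcpos : 0 < c := div_pos (by positivity) hε2
  -- upper inclusion for Q + l • 𝔎
  have hQsub : ∀ l : ℝ, 0 ≤ l → Q + l • 𝔎 ⊆ (-(c • y₀)) +ᵥ ((l + c) • 𝔎) := by
    intro l hl p hp
    obtain ⟨q, hq, z, hz, rfl⟩ := Set.mem_add.1 hp
    set z₀ : Fin m → ℝ := c⁻¹ • q with hz₀
    have hcq : c • z₀ = q := smul_inv_smul₀ hcpos.ne' q
    have hz₀mem : y₀ + z₀ ∈ 𝔎 := by
      apply hball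
      rw [Metric.mem_closedBall, dist_self_add_left]
      have hqn : ‖q‖ ≤ |R| := le_trans (mem_closedBall_zero_iff.1 (hR hq)) (le_abs_self R)
      have hz₀n : ‖z₀‖ = c⁻¹ * ‖q‖ := by
        rw [hz₀, norm_smul, Real.norm_eq_abs, abs_of_nonneg (inv_nonneg.2 hcpos.le)]
      have hcinv : c⁻¹ = ε2 / (|R| + 1) := by rw [hc, inv_div]
      rw [hz₀n, hcinv]
      have h1 : ε2 / (|R| + 1) * ‖q‖ ≤ ε2 / (|R| + 1) * (|R| + 1) :=
        mul_le_mul_of_nonneg_left (by linarith) (by positivity)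
      rwa [div_mul_cancel₀ _ (by positivity : |R| + 1 ≠ 0)] at h1
    have hτsum : c • (y₀ + z₀) = c • y₀ + q := by rw [smul_add, hcq]
    refine Set.mem_vadd_set.2 ⟨z + c • (y₀ + z₀), ?_, ?_⟩
    · rw [h𝔎conv.add_smul hl hcpos.le]
      exact Set.add_mem_add hz (smul_mem_smul_set hz₀mem)
    · rw [vadd_eq_add, hτsum]; abel
  -- upper volume bound
  have hupper : ∀ l : ℝ, 0 ≤ l → volume (B + (l • P) '' K₀) ≤
      ENNReal.ofReal (2*h₀) * (ENNReal.ofReal ((l+c)^m) * volume 𝔎) := by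
    intro l hl
    have hcont : Continuous (l • P) := (l • P).continuous_of_finiteDimensional
    have hcptBM : IsCompact (B + (l • P) '' K₀) := hB₁.add (hK₁.image hcont)
    have hsub : Φ '' (B + (l • P) '' K₀) ⊆ (Set.Icc (-h₀) h₀) ×ˢ (Q + l • 𝔎) := by
      rintro _ ⟨x, hx, rfl⟩
      obtain ⟨bq, hbq, z, hzk, rfl⟩ := Set.mem_add.1 hx
      obtain ⟨k, hk, rfl⟩ := hzk
      have hval : Φ (bq + (l • P) k) = (⟪u, bq⟫, tailL bq + l • tailL k) := by
        rw [hΦapply, inner_add_right, (hM l k).1, map_add, (hM l k).2, add_zero]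
      rw [hval]
      constructor
      · have := hBabs bq hbq
        exact abs_le.1 this
      · exact Set.add_mem_add ⟨bq, hbq, rfl⟩ (smul_mem_smul_set ⟨k, hk, rfl⟩)
    calc volume (B + (l • P) '' K₀)
        = volume (Φ '' (B + (l • P) '' K₀)) :=
          (himg _ hcptBM.isClosed.measurableSet).symm
      _ ≤ volume ((Set.Icc (-h₀) h₀) ×ˢ (Q + l • 𝔎)) := measure_mono hsub
      _ ≤ volume ((Set.Icc (-h₀) h₀) ×ˢ ((-(c • y₀)) +ᵥ ((l + c) • 𝔎))) :=
          measure_mono (Set.prod_mono_right (hQsub l hl))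
      _ = volume (Set.Icc (-h₀) h₀) * volume ((l + c) • 𝔎) := by
          rw [Measure.volume_eq_prod, Measure.prod_prod, measure_vadd]
      _ = ENNReal.ofReal (2*h₀) * (ENNReal.ofReal ((l+c)^m) * volume 𝔎) := by
          rw [Real.volume_Icc, Measure.addHaar_smul_of_nonneg volume (by linarith),
            Module.finrank_fin_fun]
          congr 2
          ring
  -- lower volume bound
  set w : Fin m → ℝ := tailL a with hwdef
  have hlower : ∀ l : ℝ, 0 ≤ l →
      ENNReal.ofReal (2*t) * (ENNReal.ofReal (l^m) * volume 𝔎) ≤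
        volume (A + (l • P) '' K₀) := by
    intro l hl
    have hcont : Continuous (l • P) := (l • P).continuous_of_finiteDimensional
    have hcptAM : IsCompact (A + (l • P) '' K₀) := hA₁.add (hK₁.image hcont)
    have hl𝔎cpt : IsCompact (l • 𝔎) := by
      rw [← Set.image_smul]
      exact h𝔎cpt.image (continuous_const_smul l)
    set S : Set (ℝ × (Fin m → ℝ)) :=
      {p | p.1 ∈ Set.Icc (-t) t ∧ p.2 - (p.1/t) • w ∈ l • 𝔎} with hS
    have hSmeas : MeasurableSet S := by
      have h1 : S = (fun p : ℝ × (Fin m → ℝ) => (p.1, p.2 - (p.1/t) • w)) ⁻¹'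
          ((Set.Icc (-t) t) ×ˢ (l • 𝔎)) := by
        ext p; simp [hS]
      rw [h1]
      exact (measurableSet_Icc.prod hl𝔎cpt.isClosed.measurableSet).preimage
        (by fun_prop)
    have hslice : ∀ x : ℝ, volume (Prod.mk x ⁻¹' S) =
        (Set.Icc (-t) t).indicator (fun _ => volume (l • 𝔎)) x := by
      intro x
      by_cases hx : x ∈ Set.Icc (-t) t
      · rw [Set.indicator_of_mem hx]
        have hpre : Prod.mk x ⁻¹' S = ((x/t) • w) +ᵥ (l • 𝔎) := by
          ext y
          simp only [hS, Set.mem_preimage, Set.mem_setOf_eq, hx, true_and]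
          rw [mem_vadd_set_iff_neg_vadd_mem, vadd_eq_add, neg_add_eq_sub]
        rw [hpre, measure_vadd]
      · rw [Set.indicator_of_notMem hx]
        have hpre : Prod.mk x ⁻¹' S = ∅ :=
          Set.eq_empty_iff_forall_notMem.2 fun y hy => hx hy.1
        simp [hpre]
    have hSvol : volume S = ENNReal.ofReal (2*t) * (ENNReal.ofReal (l^m) * volume 𝔎) := by
      rw [Measure.volume_eq_prod, Measure.prod_apply hSmeas]
      simp_rw [hslice]
      rw [lintegral_indicator measurableSet_Icc, setLIntegral_const, Real.volume_Icc,
        Measure.addHaar_smul_of_nonneg volume hl, Module.finrank_fin_fun]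
      rw [mul_comm]
      congr 2
      ring
    have hsub : S ⊆ Φ '' (A + (l • P) '' K₀) := by
      rintro ⟨x, y⟩ ⟨hx, hy⟩
      obtain ⟨k', hk'𝔎, hzeq⟩ := hy
      obtain ⟨k, hk, rfl⟩ := hk'𝔎
      set s : ℝ := x / t with hsdef
      have hs : s ∈ Set.Icc (-1:ℝ) 1 := by
        constructor
        · rw [hsdef, le_div_iff₀ htpos]
          have := hx.1; linarith
        · rw [hsdef, div_le_one htpos]; exact hx.2
      have hsa : s • a ∈ A := by
        have hna : -a ∈ A := by rw [hAsymm]; simpa using ha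
        have hmem := hA₂ ha hna
          (by have := hs.1; linarith : (0:ℝ) ≤ (1+s)/2)
          (by have := hs.2; linarith : (0:ℝ) ≤ (1-s)/2) (by ring)
        have heq : ((1+s)/2) • a + ((1-s)/2) • (-a) = s • a := by
          module
        rwa [heq] at hmem
      refine ⟨s • a + (l • P) k, Set.add_mem_add hsa (Set.mem_image_of_mem _ hk), ?_⟩
      rw [hΦapply]
      refine Prod.ext ?_ ?_
      · show ⟪u, s • a + (l • P) k⟫ = x
        rw [inner_add_right, inner_smul_right, (hM l k).1, ← ht, add_zero, hsdef,
          div_mul_cancel₀ _ htpos.ne']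
      · show tailL (s • a + (l • P) k) = y
        have hzeq' : l • tailL k = y - s • w := hzeq
        rw [map_add, _root_.map_smul, (hM l k).2, ← hwdef, hzeq']
        abel
    calc ENNReal.ofReal (2*t) * (ENNReal.ofReal (l^m) * volume 𝔎)
        = volume S := hSvol.symm
      _ ≤ volume (Φ '' (A + (l • P) '' K₀)) := measure_mono hsub
      _ = volume (A + (l • P) '' K₀) := himg _ hcptAM.isClosed.measurableSet
  -- combining
  have key : ∀ l : ℝ, 0 ≤ l → t * l^m ≤ h₀ * (l+c)^m := by
    intro l hl
    have h1 := (hlower l hl).trans ((h (l • P)).trans (hupper l hl))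
    rw [← mul_assoc, ← mul_assoc] at h1
    rw [ENNReal.mul_le_mul_iff_left h𝔎pos.ne' h𝔎fin.ne] at h1
    rw [← ENNReal.ofReal_mul (by linarith), ← ENNReal.ofReal_mul (by linarith)] at h1
    have h2 := (ENNReal.ofReal_le_ofReal_iff (by positivity)).1 h1
    nlinarith [h2]
  have hlim : Filter.Tendsto (fun l : ℝ => h₀ * (1 + c/l)^m) Filter.atTop (nhds h₀) := by
    have h1 : Filter.Tendsto (fun l : ℝ => c/l) Filter.atTop (nhds 0) :=
      Filter.Tendsto.div_atTop tendsto_const_nhds Filter.tendsto_id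
    have h2 := ((h1.const_add 1).pow m).const_mul h₀
    simpa using h2
  have hle : t ≤ h₀ := by
    refine ge_of_tendsto hlim ?_
    filter_upwards [Filter.eventually_ge_atTop (1:ℝ)] with l hl
    have hlpos : 0 < l := by linarith
    have hk := key l hlpos.le
    have hpow : (1 + c/l)^m * l^m = (l+c)^m := by
      rw [← mul_pow]
      congr 1
      field_simp
    have hfin : t * l^m ≤ (h₀ * (1 + c/l)^m) * l^m := by
      rw [mul_assoc, hpow]; exact hk
    exact (mul_le_mul_iff_left₀ (pow_pos hlpos m)).1 hfin
  linarith
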